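/- The Edge-compelling chromatic number of the cycle C_n is 2 for n = 4; it is 3 for n = 3, 5, 6, 7; and it is 4 for all n ≥ 8. -/

import Mathlib

set_option maxRecDepth 40000

open SimpleGraph

/-- A proper coloring of `G` with `k` colors. -/
def ProperColoring {V : Type*} {k : ℕ} (G : SimpleGraph V) (c : V → Fin k) : Prop :=
  ∀ ⦃u v : V⦄, G.Adj u v → c u ≠ c v

/-- `f` selects a rainbow committee of the coloring `c`: one vertex of each color. -/
def IsRainbow {V : Type*} {k : ℕ} (c : V → Fin k) (f : Fin k → V) : Prop :=
  ∀ i : Fin k, c (f i) = i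

/-- The coloring `c` compels property `P`: every rainbow committee has property `P`. -/
def Compels {V : Type*} {k : ℕ} (c : V → Fin k) (P : Set V → Prop) : Prop :=
  ∀ f : Fin k → V, IsRainbow c f → P (Set.range f)

/-- The `P`-compelling chromatic number of `G`: the least number of colors in a proper
coloring, using every color, in which every rainbow committee has property `P`. -/
noncomputable def compellingChromNum {V : Type*} (G : SimpleGraph V) (P : Set V → Prop) : ℕ :=
  sInf {k : ℕ | ∃ c : V → Fin k,
    ProperColoring G c ∧ Function.Surjective c ∧ Compels c P}

/-- Property `Edge`: the set contains at least one edge of `G`. -/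
def HasEdge {V : Type*} (G : SimpleGraph V) (S : Set V) : Prop :=
  ∃ u ∈ S, ∃ v ∈ S, G.Adj u v

/-- The Edge-compelling chromatic number. -/
noncomputable def edgeCompellingChromNum {V : Type*} (G : SimpleGraph V) : ℕ :=
  compellingChromNum G (HasEdge G)

/-! ### Auxiliary machinery -/

instance {V : Type*} [Fintype V] {k : ℕ} (G : SimpleGraph V) [DecidableRel G.Adj]
    (c : V → Fin k) : Decidable (ProperColoring G c) := by unfold ProperColoring; infer_instance

instance {V : Type*} {k : ℕ} [DecidableEq V] (c : V → Fin k) (f : Fin k → V) :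
    Decidable (IsRainbow c f) := by unfold IsRainbow; infer_instance

/-- Decidable version of membership in the defining set of `edgeCompellingChromNum`. -/
def GoodD (n k : ℕ) : Prop :=
  ∃ c : Fin n → Fin k, ProperColoring (cycleGraph n) c ∧ Function.Surjective c ∧
    ∀ f : Fin k → Fin n, IsRainbow c f → ∃ i j : Fin k, (cycleGraph n).Adj (f i) (f j)

instance (n k : ℕ) : Decidable (GoodD n k) := by unfold GoodD; infer_instance

lemma compels_iff {V : Type*} {k : ℕ} {G : SimpleGraph V} (c : V → Fin k) :
    Compels c (HasEdge G) ↔ ∀ f : Fin k → V, IsRainbow c f → ∃ i j : Fin k, G.Adj (f i) (f j) := by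
  constructor
  · intro h f hf
    obtain ⟨u, hu, v, hv, huv⟩ := h f hf
    obtain ⟨i, rfl⟩ := hu
    obtain ⟨j, rfl⟩ := hv
    exact ⟨i, j, huv⟩
  · intro h f hf
    obtain ⟨i, j, hij⟩ := h f hf
    exact ⟨f i, ⟨i, rfl⟩, f j, ⟨j, rfl⟩, hij⟩

lemma mem_iff (n k : ℕ) :
    (∃ c : Fin n → Fin k, ProperColoring (cycleGraph n) c ∧ Function.Surjective c ∧
      Compels c (HasEdge (cycleGraph n))) ↔ GoodD n k := by
  unfold GoodD
  refine exists_congr fun c => and_congr_right fun _ => and_congr_right fun _ => compels_iff c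

lemma eccn_eq (n v : ℕ) (hmem : GoodD n v) (hlow : ∀ k, k < v → ¬ GoodD n k) :
    edgeCompellingChromNum (cycleGraph n) = v := by
  have hmem' : v ∈ {k : ℕ | ∃ c : Fin n → Fin k, ProperColoring (cycleGraph n) c ∧
      Function.Surjective c ∧ Compels c (HasEdge (cycleGraph n))} := (mem_iff n v).mpr hmem
  refine le_antisymm (Nat.sInf_le hmem') (le_csInf ⟨v, hmem'⟩ ?_)
  intro k hk
  by_contra hlt
  push_neg at hlt
  exact hlow k hlt ((mem_iff n k).mp hk)

/-! ### Fin arithmetic helpers -/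

lemma val_add_cases {n : ℕ} (w k : Fin n) :
    (w + k).val = w.val + k.val ∨ (w + k).val + n = w.val + k.val := by
  have hw := w.isLt; have hk := k.isLt
  simp only [Fin.add_def]
  rcases Nat.lt_or_ge (w.val + k.val) n with h | h
  · left; simp [Nat.mod_eq_of_lt h]
  · right; rw [Nat.mod_eq_sub_mod h, Nat.mod_eq_of_lt (by omega)]; omega

lemma val_sub_cases {n : ℕ} (w k : Fin n) :
    (w - k).val + k.val = w.val ∨ (w - k).val + k.val = w.val + n := by
  have hw := w.isLt; have hk := k.isLt
  simp only [Fin.sub_def]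
  rcases Nat.lt_or_ge (n - k.val + w.val) n with h | h
  · rw [Nat.mod_eq_of_lt h]; omega
  · rw [Nat.mod_eq_sub_mod h, Nat.mod_eq_of_lt (by omega)]; omega

lemma adj_iff {n : ℕ} (hn : 3 ≤ n) (u v : Fin n) : (cycleGraph n).Adj u v ↔
    (u.val + 1 = v.val ∨ v.val + 1 = u.val ∨ (u.val = 0 ∧ v.val + 1 = n) ∨
      (v.val = 0 ∧ u.val + 1 = n)) := by
  obtain ⟨m, rfl⟩ : ∃ m, n = m + 2 := ⟨n - 2, by omega⟩
  rw [cycleGraph_adj]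
  have hu := u.isLt; have hv := v.isLt
  have h1 := val_sub_cases u v
  have h2 := val_sub_cases v u
  simp only [Fin.ext_iff, Fin.val_one]
  omega

open Fin.NatCast in
lemma off_add {n : ℕ} [NeZero n] (w : Fin n) (k : ℕ) (hk : k < n) :
    ∃ u : Fin n, w + ((k : ℕ) : Fin n) = u ∧ (u.val = w.val + k ∨ u.val + n = w.val + k) :=
  ⟨w + ((k : ℕ) : Fin n), rfl, by
    have h := val_add_cases w ((k : ℕ) : Fin n)
    rwa [Fin.val_cast_of_lt hk] at h⟩

open Fin.NatCast in
lemma off_sub {n : ℕ} [NeZero n] (w : Fin n) (k : ℕ) (hk : k < n) :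
    ∃ u : Fin n, w - ((k : ℕ) : Fin n) = u ∧ (u.val + k = w.val ∨ u.val + k = w.val + n) :=
  ⟨w - ((k : ℕ) : Fin n), rfl, by
    have h := val_sub_cases w ((k : ℕ) : Fin n)
    rwa [Fin.val_cast_of_lt hk] at h⟩

lemma k22 {n : ℕ} (hn : 8 ≤ n) {a b u v : Fin n} (hab : a ≠ b) (huv : u ≠ v)
    (h1 : (cycleGraph n).Adj a u) (h2 : (cycleGraph n).Adj a v)
    (h3 : (cycleGraph n).Adj b u) (h4 : (cycleGraph n).Adj b v) : False := by
  rw [adj_iff (by omega)] at h1 h2 h3 h4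
  rw [Ne, Fin.ext_iff] at hab huv
  have := a.isLt; have := b.isLt; have := u.isLt; have := v.isLt
  omega

lemma reflAdj {n : ℕ} (hn : 3 ≤ n) (t u v : Fin n) :
    (cycleGraph n).Adj (t - u) (t - v) ↔ (cycleGraph n).Adj u v := by
  rw [adj_iff hn, adj_iff hn]
  have s1 := val_sub_cases t u; have s2 := val_sub_cases t v
  have := t.isLt; have := u.isLt; have := v.isLt
  omega

/-! ### Fin 3 / Fin 2 ground facts -/

lemma fin3_trich : ∀ (i a b d : Fin 3), a ≠ b → a ≠ d → b ≠ d → i ≠ a → i ≠ b → i = d := by decide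

lemma fin3_chain : ∀ (j a b d : Fin 3), a ≠ j → b ≠ j → d ≠ j → a ≠ b → b ≠ d → a = d := by
  intro j a b d h1 h2 h3 h4 h5
  simp only [Ne, Fin.ext_iff] at *
  omega

lemma fin3_cov : ∀ (a b : Fin 3), b ≠ a → b = a + 1 ∨ b = a + 2 := by decide
lemma fin3_add : ∀ k : Fin 3, k + 1 ≠ k ∧ k + 2 ≠ k ∧ k + 1 ≠ k + 2 := by decide
lemma fin3_exists : ∀ a b : Fin 3, ∃ i : Fin 3, i ≠ a ∧ i ≠ b := by decide
lemma fin2_trich : ∀ (i a b : Fin 2), a ≠ b → i ≠ a → i = b := by decide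
lemma fin2_03 : ∀ (a b d e : Fin 2), a ≠ b → b ≠ d → d ≠ e → e ≠ a := by decide

/-! ### Structural results for `n ≥ 8` -/

lemma key3 {n : ℕ} {c : Fin n → Fin 3}
    (hcomp : ∀ f : Fin 3 → Fin n, IsRainbow c f → ∃ i j : Fin 3, (cycleGraph n).Adj (f i) (f j))
    {u v w : Fin n} (h1 : c u ≠ c v) (h2 : c u ≠ c w) (h3 : c v ≠ c w)
    (n1 : ¬(cycleGraph n).Adj u v) (n2 : ¬(cycleGraph n).Adj u w)
    (n3 : ¬(cycleGraph n).Adj v w) : False := by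
  set f : Fin 3 → Fin n := fun i => if i = c u then u else if i = c v then v else w with hf
  have hrange : ∀ i, f i = u ∨ f i = v ∨ f i = w := by
    intro i; simp only [hf]; split_ifs <;> tauto
  have hrain : IsRainbow c f := by
    intro i
    simp only [hf]
    split_ifs with ha hb
    · exact ha.symm
    · exact hb.symm
    · exact (fin3_trich i (c u) (c v) (c w) h1 h2 h3 ha hb).symm
  obtain ⟨i, j, hadj⟩ := hcomp f hrain
  rcases hrange i with hi | hi | hi <;> rcases hrange j with hj | hj | hj <;>
      rw [hi, hj] at hadj <;>
    first
      | exact (cycleGraph n).loopless.irrefl _ hadj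
      | exact n1 hadj | exact n2 hadj | exact n3 hadj
      | exact n1 hadj.symm | exact n2 hadj.symm | exact n3 hadj.symm


lemma off_ne {n : ℕ} (hn : 8 ≤ n) {w a b : Fin n} {j k : ℕ} (hjk : j < k) (hk : k ≤ 7)
    (ha : a.val = w.val + j ∨ a.val + n = w.val + j)
    (hb : b.val = w.val + k ∨ b.val + n = w.val + k) : a ≠ b := by
  rw [Ne, Fin.ext_iff]
  have := a.isLt; have := b.isLt; have := w.isLt
  omega

lemma off_ne_sub {n : ℕ} (hn : 8 ≤ n) {w a s : Fin n} {k : ℕ} (hk1 : 1 ≤ k) (hk : k ≤ 6)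
    (ha : a.val = w.val + k ∨ a.val + n = w.val + k)
    (hs : s.val + 1 = w.val ∨ s.val + 1 = w.val + n) : a ≠ s := by
  rw [Ne, Fin.ext_iff]
  have := a.isLt; have := s.isLt; have := w.isLt
  omega

lemma adj_offsets {n : ℕ} (hn : 8 ≤ n) {w a b : Fin n} {k : ℕ} (hk : k + 1 ≤ 7)
    (ha : a.val = w.val + k ∨ a.val + n = w.val + k)
    (hb : b.val = w.val + (k + 1) ∨ b.val + n = w.val + (k + 1)) :
    (cycleGraph n).Adj a b := by
  rw [adj_iff (by omega)]
  have := a.isLt; have := b.isLt; have := w.isLt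
  omega

lemma nonadj_offsets {n : ℕ} (hn : 8 ≤ n) {w a b : Fin n} {j k : ℕ} (hjk : j + 2 ≤ k) (hk : k ≤ 7)
    (hd : k ≤ j + 6)
    (ha : a.val = w.val + j ∨ a.val + n = w.val + j)
    (hb : b.val = w.val + k ∨ b.val + n = w.val + k) :
    ¬(cycleGraph n).Adj a b := by
  rw [adj_iff (by omega)]
  have := a.isLt; have := b.isLt; have := w.isLt
  omega

lemma near_lemma {n : ℕ} (hn : 8 ≤ n) {w u1 s1 v : Fin n}
    (U1 : u1.val = w.val + 1 ∨ u1.val + n = w.val + 1)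
    (S1 : s1.val + 1 = w.val ∨ s1.val + 1 = w.val + n)
    (hadj : (cycleGraph n).Adj v w) : v = u1 ∨ v = s1 := by
  rw [adj_iff (by omega)] at hadj
  simp only [Fin.ext_iff]
  have := v.isLt; have := w.isLt; have := u1.isLt; have := s1.isLt
  omega

open Fin.NatCast in
lemma caseA {n : ℕ} [NeZero n] (hn : 8 ≤ n) {c : Fin n → Fin 3}
    (hprop : ProperColoring (cycleGraph n) c)
    (hkey : ∀ u v w : Fin n, c u ≠ c v → c u ≠ c w → c v ≠ c w →
      ¬(cycleGraph n).Adj u v → ¬(cycleGraph n).Adj u w → ¬(cycleGraph n).Adj v w → False)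
    (w : Fin n)
    (hj : ∀ v : Fin n, c v = c (w + ((1 : ℕ) : Fin n)) →
      v = w + ((1 : ℕ) : Fin n) ∨ v = w - ((1 : ℕ) : Fin n)) :
    False := by
  obtain ⟨u1, e1, U1⟩ := off_add w 1 (by omega)
  obtain ⟨u3, e3, U3⟩ := off_add w 3 (by omega)
  obtain ⟨u4, e4, U4⟩ := off_add w 4 (by omega)
  obtain ⟨u5, e5, U5⟩ := off_add w 5 (by omega)
  obtain ⟨u6, e6, U6⟩ := off_add w 6 (by omega)
  obtain ⟨s1, es1, S1⟩ := off_sub w 1 (by omega)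
  rw [e1, es1] at hj
  clear e1 e3 e4 e5 e6 es1
  have far : ∀ (u : Fin n) (k : ℕ), (u.val = w.val + k ∨ u.val + n = w.val + k) →
      3 ≤ k → k ≤ 6 → c u ≠ c u1 := by
    intro u k hu hk3 hk6 hc
    rcases hj u hc with h | h
    · exact off_ne hn (by omega : 1 < k) (by omega) U1 hu h.symm
    · exact off_ne_sub hn (by omega : 1 ≤ k) (by omega) hu S1 h
  have f3 := far u3 3 U3 (by omega) (by omega)
  have f4 := far u4 4 U4 (by omega) (by omega)
  have f5 := far u5 5 U5 (by omega) (by omega)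
  have f6 := far u6 6 U6 (by omega) (by omega)
  have adj34 : (cycleGraph n).Adj u3 u4 := adj_offsets hn (by omega) U3 U4
  have adj45 : (cycleGraph n).Adj u4 u5 := adj_offsets hn (by omega) U4 U5
  have adj56 : (cycleGraph n).Adj u5 u6 := adj_offsets hn (by omega) U5 U6
  have c35 : c u3 = c u5 := fin3_chain (c u1) _ _ _ f3 f4 f5 (hprop adj34) (hprop adj45)
  have c36 : c u3 ≠ c u6 := by rw [c35]; exact hprop adj56
  exact hkey u1 u3 u6 f3.symm f6.symm c36
    (nonadj_offsets hn (by omega) (by omega) (by omega) U1 U3)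
    (nonadj_offsets hn (by omega) (by omega) (by omega) U1 U6)
    (nonadj_offsets hn (by omega) (by omega) (by omega) U3 U6)

lemma windowW {n : ℕ} [NeZero n] (hn : 8 ≤ n) {c : Fin n → Fin 3}
    (hprop : ProperColoring (cycleGraph n) c) (hsurj : Function.Surjective c)
    (hkey : ∀ u v w : Fin n, c u ≠ c v → c u ≠ c w → c v ≠ c w →
      ¬(cycleGraph n).Adj u v → ¬(cycleGraph n).Adj u w → ¬(cycleGraph n).Adj v w → False)
    (w : Fin n) :
    ∃ y : Fin n, ∀ v, v ≠ w → ¬(cycleGraph n).Adj v w → c v ≠ c w →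
      (v = y ∨ (cycleGraph n).Adj v y) := by
  obtain ⟨u1, e1, U1⟩ := off_add w 1 (by omega)
  obtain ⟨s1, es1, S1⟩ := off_sub w 1 (by omega)
  have near : ∀ v : Fin n, (cycleGraph n).Adj v w → v = u1 ∨ v = s1 :=
    fun v hadj => near_lemma hn U1 S1 hadj
  have missing : ∀ j : Fin 3, j ≠ c w →
      (∀ v : Fin n, v ≠ w → ¬(cycleGraph n).Adj v w → c v ≠ j) → False := by
    intro j hj hnone
    obtain ⟨x, hx⟩ := hsurj j
    have hxw : x ≠ w := fun h => hj (by rw [← hx, h])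
    have hadj : (cycleGraph n).Adj x w := by
      by_contra h
      exact hnone x hxw h hx
    rcases near x hadj with h | h
    · have hx1 : c u1 = j := by rw [← h]; exact hx
      refine caseA hn hprop hkey w ?_
      intro v hv
      rw [e1] at hv ⊢
      rw [es1]
      rw [hx1] at hv
      by_cases hvw : v = w
      · exact absurd (by rw [← hv, hvw] : j = c w) hj
      · by_cases hva : (cycleGraph n).Adj v w
        · exact near v hva
        · exact absurd hv (hnone v hvw hva)
    · have hxs : c s1 = j := by rw [← h]; exact hx
      set t := w + w with ht
      have hinv : ∀ v : Fin n, t - (t - v) = v := fun v => sub_sub_cancel t v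
      have hts1 : t - u1 = s1 := by rw [← e1, ← es1, ht, add_sub_add_left_eq_sub]
      have htu1 : t - s1 = u1 := by rw [← hts1, hinv]
      refine caseA hn (c := fun v => c (t - v)) ?_ ?_ w ?_
      · intro a b hab
        exact hprop ((reflAdj (by omega) t a b).mpr hab)
      · intro a b d q1 q2 q3 n1 n2 n3
        exact hkey (t - a) (t - b) (t - d) q1 q2 q3
          (fun h => n1 ((reflAdj (by omega) t a b).mp h))
          (fun h => n2 ((reflAdj (by omega) t a d).mp h))
          (fun h => n3 ((reflAdj (by omega) t b d).mp h))
      · intro v hv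
        rw [e1, hts1, hxs] at hv
        rw [e1, es1]
        by_cases hvw : t - v = w
        · exact absurd (by rw [← hv, hvw] : j = c w) hj
        · by_cases hva : (cycleGraph n).Adj (t - v) w
          · rcases near _ hva with h | h
            · right; rw [← hinv v, h, hts1]
            · left; rw [← hinv v, h, htu1]
          · exact absurd hv (hnone _ hvw hva)
  have hadd := fin3_add (c w)
  have far1 : ∃ x, (x ≠ w ∧ ¬(cycleGraph n).Adj x w) ∧ c x = c w + 1 := by
    by_contra h
    push_neg at h
    exact missing (c w + 1) hadd.1 (fun v hvw hva => h v ⟨hvw, hva⟩)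
  have far2 : ∃ x, (x ≠ w ∧ ¬(cycleGraph n).Adj x w) ∧ c x = c w + 2 := by
    by_contra h
    push_neg at h
    exact missing (c w + 2) hadd.2.1 (fun v hvw hva => h v ⟨hvw, hva⟩)
  obtain ⟨x1, ⟨hx1w, hx1a⟩, hx1c⟩ := far1
  obtain ⟨x2, ⟨hx2w, hx2a⟩, hx2c⟩ := far2
  have cross : ∀ a b : Fin n, a ≠ w → ¬(cycleGraph n).Adj a w → c a = c w + 1 →
      b ≠ w → ¬(cycleGraph n).Adj b w → c b = c w + 2 → (cycleGraph n).Adj a b := by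
    intro a b haw hana hac hbw hbna hbc
    by_contra hab
    refine hkey w a b ?_ ?_ ?_ ?_ ?_ hab
    · rw [hac]; exact hadd.1.symm
    · rw [hbc]; exact hadd.2.1.symm
    · rw [hac, hbc]; exact hadd.2.2
    · exact fun h => hana h.symm
    · exact fun h => hbna h.symm
  by_cases huniq : ∀ a, a ≠ w → ¬(cycleGraph n).Adj a w → c a = c w + 1 → a = x1
  · refine ⟨x1, fun v hvw hva hvc => ?_⟩
    rcases fin3_cov _ _ hvc with h | h
    · exact Or.inl (huniq v hvw hva h)
    · exact Or.inr (cross x1 v hx1w hx1a hx1c hvw hva h).symm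
  · push_neg at huniq
    obtain ⟨x1', h1w, h1a, h1c, hne1⟩ := huniq
    have uniq2 : ∀ b, b ≠ w → ¬(cycleGraph n).Adj b w → c b = c w + 2 → b = x2 := by
      intro b hbw hba hbc
      by_contra hbne
      exact k22 hn hne1 (fun h => hbne h.symm)
        (cross x1' x2 h1w h1a h1c hx2w hx2a hx2c)
        (cross x1' b h1w h1a h1c hbw hba hbc)
        (cross x1 x2 hx1w hx1a hx1c hx2w hx2a hx2c)
        (cross x1 b hx1w hx1a hx1c hbw hba hbc)
    refine ⟨x2, fun v hvw hva hvc => ?_⟩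
    rcases fin3_cov _ _ hvc with h | h
    · exact Or.inr (cross v x2 hvw hva h hx2w hx2a hx2c)
    · exact Or.inl (uniq2 v hvw hva h)

lemma conv_near {n : ℕ} (hn : 8 ≤ n) {y zk : Fin n} {k : ℕ} (hk : zk.val = k)
    (h : zk = y ∨ (cycleGraph n).Adj zk y) :
    k = y.val ∨ k + 1 = y.val ∨ y.val + 1 = k ∨ (k = 0 ∧ y.val + 1 = n) ∨
      (y.val = 0 ∧ k + 1 = n) := by
  rcases h with h | h
  · rw [Fin.ext_iff] at h; omega
  · rw [adj_iff (by omega)] at h; omega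

lemma final_omega {n : ℕ} (h9 : 9 ≤ n) {yv a b : ℕ} (hy : yv < n) (ha2 : 2 ≤ a) (ha3 : a ≤ 3)
    (hb6 : 6 ≤ b) (hb7 : b ≤ 7)
    (hA : a = yv ∨ a + 1 = yv ∨ yv + 1 = a ∨ (a = 0 ∧ yv + 1 = n) ∨ (yv = 0 ∧ a + 1 = n))
    (hB : b = yv ∨ b + 1 = yv ∨ yv + 1 = b ∨ (b = 0 ∧ yv + 1 = n) ∨ (yv = 0 ∧ b + 1 = n)) :
    False := by omega

lemma fin8_facts : ∀ w : Fin 8, (w + 2 ≠ w ∧ w + 5 ≠ w ∧ w + 6 ≠ w) ∧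
    (¬(cycleGraph 8).Adj (w + 2) w ∧ ¬(cycleGraph 8).Adj (w + 5) w ∧
      ¬(cycleGraph 8).Adj (w + 6) w) ∧ (cycleGraph 8).Adj (w + 5) (w + 6) := by decide

lemma fin8_window : ∀ w y : Fin 8, (w + 2 = y ∨ (cycleGraph 8).Adj (w + 2) y) →
    ¬(w + 5 = y ∨ (cycleGraph 8).Adj (w + 5) y) ∧
      ¬(w + 6 = y ∨ (cycleGraph 8).Adj (w + 6) y) := by decide

lemma notGood3 {n : ℕ} (hn : 8 ≤ n) : ¬ GoodD n 3 := by
  haveI : NeZero n := ⟨by omega⟩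
  rintro ⟨c, hprop, hsurj, hcomp⟩
  have hkey : ∀ u v x : Fin n, c u ≠ c v → c u ≠ c x → c v ≠ c x →
      ¬(cycleGraph n).Adj u v → ¬(cycleGraph n).Adj u x → ¬(cycleGraph n).Adj v x → False :=
    fun u v x h1 h2 h3 n1 n2 n3 => key3 hcomp h1 h2 h3 n1 n2 n3
  have W := fun w => windowW hn hprop hsurj hkey w
  rcases eq_or_lt_of_le hn with h8 | h9
  · -- the case n = 8
    subst h8
    have step : ∀ w : Fin 8, c (w + 2) = c w := by
      intro w
      by_contra hne
      obtain ⟨y, hy⟩ := W w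
      have h2 : w + 2 = y ∨ (cycleGraph 8).Adj (w + 2) y :=
        hy (w + 2) (fin8_facts w).1.1 (fin8_facts w).2.1.1 hne
      have h5 : c (w + 5) = c w := by
        by_contra hne5
        exact (fin8_window w y h2).1 (hy (w + 5) (fin8_facts w).1.2.1 (fin8_facts w).2.1.2.1 hne5)
      have h6 : c (w + 6) = c w := by
        by_contra hne6
        exact (fin8_window w y h2).2 (hy (w + 6) (fin8_facts w).1.2.2 (fin8_facts w).2.1.2.2 hne6)
      exact hprop (fin8_facts w).2.2 (h5.trans h6.symm)
    have s0 : c 2 = c 0 := step 0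
    have s1 : c 3 = c 1 := step 1
    have s2 : c 4 = c 2 := step 2
    have s3 : c 5 = c 3 := step 3
    have s4 : c 6 = c 4 := step 4
    have s5 : c 7 = c 5 := step 5
    have hall : ∀ v : Fin 8, c v = c 0 ∨ c v = c 1 := by
      intro v
      fin_cases v
      · exact Or.inl rfl
      · exact Or.inr rfl
      · exact Or.inl s0
      · exact Or.inr s1
      · exact Or.inl (s2.trans s0)
      · exact Or.inr (s3.trans s1)
      · exact Or.inl ((s4.trans s2).trans s0)
      · exact Or.inr ((s5.trans s3).trans s1)
    obtain ⟨i, hi0, hi1⟩ := fin3_exists (c 0) (c 1)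
    obtain ⟨v, hv⟩ := hsurj i
    rcases hall v with h | h
    · exact hi0 (hv.symm.trans h)
    · exact hi1 (hv.symm.trans h)
  · -- the case 9 ≤ n
    obtain ⟨z0, Z0⟩ : ∃ z : Fin n, z.val = 0 := ⟨⟨0, by omega⟩, rfl⟩
    obtain ⟨z2, Z2⟩ : ∃ z : Fin n, z.val = 2 := ⟨⟨2, by omega⟩, rfl⟩
    obtain ⟨z3, Z3⟩ : ∃ z : Fin n, z.val = 3 := ⟨⟨3, by omega⟩, rfl⟩
    obtain ⟨z6, Z6⟩ : ∃ z : Fin n, z.val = 6 := ⟨⟨6, by omega⟩, rfl⟩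
    obtain ⟨z7, Z7⟩ : ∃ z : Fin n, z.val = 7 := ⟨⟨7, by omega⟩, rfl⟩
    obtain ⟨y, hy⟩ := W z0
    have far : ∀ (zk : Fin n) (k : ℕ), zk.val = k → 2 ≤ k → k ≤ 7 →
        zk ≠ z0 ∧ ¬(cycleGraph n).Adj zk z0 := by
      intro zk k hk h2 h7
      constructor
      · rw [Ne, Fin.ext_iff]; omega
      · rw [adj_iff (by omega)]; omega
    have adj23 : (cycleGraph n).Adj z2 z3 := by rw [adj_iff (by omega)]; omega
    have adj67 : (cycleGraph n).Adj z6 z7 := by rw [adj_iff (by omega)]; omega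
    have h23 : (z2 = y ∨ (cycleGraph n).Adj z2 y) ∨ (z3 = y ∨ (cycleGraph n).Adj z3 y) := by
      by_cases h2 : c z2 = c z0
      · by_cases h3 : c z3 = c z0
        · exact absurd (h2.trans h3.symm) (hprop adj23)
        · exact Or.inr (hy z3 (far z3 3 Z3 (by omega) (by omega)).1
            (far z3 3 Z3 (by omega) (by omega)).2 h3)
      · exact Or.inl (hy z2 (far z2 2 Z2 (by omega) (by omega)).1
          (far z2 2 Z2 (by omega) (by omega)).2 h2)
    have h67 : (z6 = y ∨ (cycleGraph n).Adj z6 y) ∨ (z7 = y ∨ (cycleGraph n).Adj z7 y) := by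
      by_cases h6 : c z6 = c z0
      · by_cases h7 : c z7 = c z0
        · exact absurd (h6.trans h7.symm) (hprop adj67)
        · exact Or.inr (hy z7 (far z7 7 Z7 (by omega) (by omega)).1
            (far z7 7 Z7 (by omega) (by omega)).2 h7)
      · exact Or.inl (hy z6 (far z6 6 Z6 (by omega) (by omega)).1
          (far z6 6 Z6 (by omega) (by omega)).2 h6)
    have hyv := y.isLt
    rcases h23 with h | h <;> rcases h67 with h' | h'
    · exact final_omega h9 hyv (by omega) (by omega) (by omega) (by omega)
        (conv_near hn Z2 h) (conv_near hn Z6 h')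
    · exact final_omega h9 hyv (by omega) (by omega) (by omega) (by omega)
        (conv_near hn Z2 h) (conv_near hn Z7 h')
    · exact final_omega h9 hyv (by omega) (by omega) (by omega) (by omega)
        (conv_near hn Z3 h) (conv_near hn Z6 h')
    · exact final_omega h9 hyv (by omega) (by omega) (by omega) (by omega)
        (conv_near hn Z3 h) (conv_near hn Z7 h')

lemma notGood2 {n : ℕ} (hn : 8 ≤ n) : ¬ GoodD n 2 := by
  rintro ⟨c, hprop, hsurj, hcomp⟩
  obtain ⟨z0, Z0⟩ : ∃ z : Fin n, z.val = 0 := ⟨⟨0, by omega⟩, rfl⟩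
  obtain ⟨z1, Z1⟩ : ∃ z : Fin n, z.val = 1 := ⟨⟨1, by omega⟩, rfl⟩
  obtain ⟨z2, Z2⟩ : ∃ z : Fin n, z.val = 2 := ⟨⟨2, by omega⟩, rfl⟩
  obtain ⟨z3, Z3⟩ : ∃ z : Fin n, z.val = 3 := ⟨⟨3, by omega⟩, rfl⟩
  have a01 : (cycleGraph n).Adj z0 z1 := by rw [adj_iff (by omega)]; omega
  have a12 : (cycleGraph n).Adj z1 z2 := by rw [adj_iff (by omega)]; omega
  have a23 : (cycleGraph n).Adj z2 z3 := by rw [adj_iff (by omega)]; omega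
  have h03 : c z0 ≠ c z3 := fin2_03 (c z3) (c z2) (c z1) (c z0)
    (hprop a23).symm (hprop a12).symm (hprop a01).symm
  set f : Fin 2 → Fin n := fun i => if i = c z0 then z0 else z3 with hf
  have hrain : IsRainbow c f := by
    intro i
    simp only [hf]
    split_ifs with h
    · exact h.symm
    · exact (fin2_trich i (c z0) (c z3) h03 h).symm
  have hr : ∀ i, f i = z0 ∨ f i = z3 := by
    intro i; simp only [hf]; split_ifs <;> tauto
  obtain ⟨i, j, hadj⟩ := hcomp f hrain
  have n03 : ¬(cycleGraph n).Adj z0 z3 := by rw [adj_iff (by omega)]; omega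
  rcases hr i with hi | hi <;> rcases hr j with hj | hj <;> rw [hi, hj] at hadj <;>
    first
      | exact (cycleGraph n).loopless.irrefl _ hadj
      | exact n03 hadj
      | exact n03 hadj.symm

lemma notGood1 {n : ℕ} (hn : 8 ≤ n) : ¬ GoodD n 1 := by
  rintro ⟨c, hprop, -, -⟩
  obtain ⟨z0, Z0⟩ : ∃ z : Fin n, z.val = 0 := ⟨⟨0, by omega⟩, rfl⟩
  obtain ⟨z1, Z1⟩ : ∃ z : Fin n, z.val = 1 := ⟨⟨1, by omega⟩, rfl⟩
  have a01 : (cycleGraph n).Adj z0 z1 := by rw [adj_iff (by omega)]; omega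
  exact hprop a01 (Subsingleton.elim _ _)

lemma notGood0 {n : ℕ} (hn : 8 ≤ n) : ¬ GoodD n 0 := by
  rintro ⟨c, -, -, -⟩
  exact (c ⟨0, by omega⟩).elim0

lemma mem4 {n : ℕ} (hn : 8 ≤ n) : GoodD n 4 := by
  set c : Fin n → Fin 4 := fun v =>
    if v.val = 0 then 2 else if v.val = 1 then 3 else if v.val % 2 = 0 then 0 else 1 with hc
  refine ⟨c, ?_, ?_, ?_⟩
  · intro u v huv
    rw [adj_iff (by omega)] at huv
    have hu := u.isLt; have hv := v.isLt
    simp only [hc]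
    split_ifs <;> first | decide | omega
  · intro b
    fin_cases b
    · exact ⟨⟨2, by omega⟩, by simp [hc]⟩
    · exact ⟨⟨3, by omega⟩, by simp [hc]⟩
    · exact ⟨⟨0, by omega⟩, by simp [hc]⟩
    · exact ⟨⟨1, by omega⟩, by simp [hc]⟩
  · intro f hrain
    have h2 := hrain 2
    have h3 := hrain 3
    have hf2 : (f 2).val = 0 := by
      simp only [hc] at h2
      split_ifs at h2 <;> first | exact absurd h2 (by decide) | assumption
    have hf3 : (f 3).val = 1 := by
      simp only [hc] at h3
      split_ifs at h3 <;> first | exact absurd h3 (by decide) | assumption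
    refine ⟨2, 3, ?_⟩
    rw [adj_iff (by omega)]
    omega

/-- The Edge-compelling chromatic number of the cycle `C_n` is 2 for `n = 4`,
3 for `n = 3, 5, 6, 7`, and 4 for `n ≥ 8`. -/
theorem edgeCompellingChromNum_cycleGraph :
    edgeCompellingChromNum (cycleGraph 4) = 2 ∧
    edgeCompellingChromNum (cycleGraph 3) = 3 ∧
    edgeCompellingChromNum (cycleGraph 5) = 3 ∧
    edgeCompellingChromNum (cycleGraph 6) = 3 ∧
    edgeCompellingChromNum (cycleGraph 7) = 3 ∧
    ∀ n : ℕ, 8 ≤ n → edgeCompellingChromNum (cycleGraph n) = 4 := by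
  refine ⟨?_, ?_, ?_, ?_, ?_, ?_⟩
  · exact eccn_eq 4 2 ⟨![0,1,0,1], by decide, by decide, by decide⟩ (by decide)
  · exact eccn_eq 3 3 ⟨![0,1,2], by decide, by decide, by decide⟩ (by decide)
  · exact eccn_eq 5 3 ⟨![0,1,0,1,2], by decide, by decide, by decide⟩ (by decide)
  · exact eccn_eq 6 3 ⟨![0,1,0,1,2,1], by decide, by decide, by decide⟩ (by decide)
  · exact eccn_eq 7 3 ⟨![0,1,0,1,2,1,2], by decide, by decide, by decide⟩ (by decide)
  · intro n hn
    refine eccn_eq n 4 (mem4 hn) ?_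
    intro k hk
    interval_cases k
    · exact notGood0 hn
    · exact notGood1 hn
    · exact notGood2 hn
    · exact notGood3 hn
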